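/- Let E ⊆ [0,1]^ℕ be a Borel set such that [0,1]^ℕ ∖ E is countable-dimensional and every countable-dimensional subset of E satisfies dim ≤ 0. If the set F(E) ∖ F₀'(E), where F₀'(E) = {A ∈ F(E) : dim A ≤ 0}, is Souslin in the Effros Borel space (F(E), 𝓑_{F(E)}), then the collection 𝓒 of all countable-dimensional compact subsets of the Hilbert cube [0,1]^ℕ is a coanalytic subset of the hyperspace F([0,1]^ℕ) equipped with the Vietoris topology. -/

import Mathlib

open Set Topology TopologicalSpace MeasureTheory

/-- The Effros Borel structure on the collection of closed subsets of `X`. -/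
def effrosSigma (X : Type*) [TopologicalSpace X] :
    MeasurableSpace {A : Set X // IsClosed A} :=
  MeasurableSpace.generateFrom
    {𝓤 : Set {A : Set X // IsClosed A} |
      ∃ U : Set X, IsOpen U ∧ 𝓤 = {A : {A : Set X // IsClosed A} | ((A : Set X) ∩ U).Nonempty}}

/-- `𝓐` is the result of the Souslin operation applied to `m`-measurable sets. -/
def IsSouslinIn {α : Type*} (m : MeasurableSpace α) (𝓐 : Set α) : Prop :=
  ∃ f : List ℕ → Set α, (∀ s, MeasurableSet[m] (f s)) ∧
    𝓐 = ⋃ σ : ℕ → ℕ, ⋂ n : ℕ, f (List.ofFn fun i : Fin n => σ i)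

/-- dim X ≤ 0 : `X` has a base consisting of clopen sets (or is empty). -/
def ZeroDimensional (X : Type*) [TopologicalSpace X] : Prop :=
  ∃ B : Set (Set X), (∀ s ∈ B, IsClopen s) ∧ IsTopologicalBasis B

/-- Every point of `S` is isolated in the subspace `S`. -/
def RelativelyDiscrete {E : Type*} [TopologicalSpace E] (S : Set E) : Prop :=
  ∀ x ∈ S, ∃ U : Set E, IsOpen U ∧ U ∩ S = {x}

/-- countable union of zero-dimensional subspaces -/
def CountableDimensional (X : Type*) [TopologicalSpace X] : Prop :=
  ∃ C : ℕ → Set X, (⋃ n, C n) = univ ∧ ∀ n, ZeroDimensional (C n)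

/-- F₀(X): nonempty zero-dimensional closed sets -/
def zeroDimClosedSets (X : Type*) [TopologicalSpace X] :
    Set {A : Set X // IsClosed A} :=
  {A | (A : Set X).Nonempty ∧ ZeroDimensional (A : Set X)}

/-- The Vietoris topology on the collection of closed subsets of `X`. -/
def vietoris (X : Type*) [TopologicalSpace X] :
    TopologicalSpace {A : Set X // IsClosed A} :=
  TopologicalSpace.generateFrom
    ({𝓤 | ∃ U : Set X, IsOpen U ∧ 𝓤 = {A : {A : Set X // IsClosed A} | (A : Set X) ⊆ U}} ∪
     {𝓤 | ∃ U : Set X, IsOpen U ∧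
        𝓤 = {A : {A : Set X // IsClosed A} | ((A : Set X) ∩ U).Nonempty}})

/-- The Wijsman topology on nonempty closed subsets of a metric space. -/
noncomputable def wijsman (E : Type*) [MetricSpace E] :
    TopologicalSpace {A : Set E // IsClosed A ∧ A.Nonempty} :=
  ⨅ z : E, TopologicalSpace.induced (fun A => Metric.infDist z (A : Set E)) inferInstance

/-- The Hilbert cube `[0,1]^ℕ`. -/
abbrev HilbertCube : Type := ℕ → unitInterval

private lemma isInducing_cancel {α β γ : Type*} [TopologicalSpace α] [TopologicalSpace β]
    [TopologicalSpace γ] {f : α → β} {g : β → γ} (hg : IsInducing g)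
    (hgf : IsInducing (g ∘ f)) : IsInducing f := by
  constructor
  rw [hgf.eq_induced, ← induced_compose, ← hg.eq_induced]


private lemma isInducing_cancel' {α β γ : Type*} [TopologicalSpace α] [TopologicalSpace β]
    [TopologicalSpace γ] {f : α → β} {g : β → γ} {h : α → γ} (hg : IsInducing g)
    (hh : IsInducing h) (heq : ∀ x, g (f x) = h x) : IsInducing f := by
  have hfun : g ∘ f = h := funext heq
  exact isInducing_cancel hg (hfun ▸ hh)

private lemma ZeroDimensional.of_isInducing {α β : Type*} [TopologicalSpace α]
    [TopologicalSpace β] {f : α → β} (h : ZeroDimensional β) (hf : IsInducing f) :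
    ZeroDimensional α := by
  obtain ⟨B, hclopen, hbasis⟩ := h
  refine ⟨(f ⁻¹' ·) '' B, ?_, hbasis.isInducing hf⟩
  rintro s ⟨t, ht, rfl⟩
  exact (hclopen t ht).preimage hf.continuous

private lemma CountableDimensional.of_isInducing {α β : Type*} [TopologicalSpace α]
    [TopologicalSpace β] {f : α → β} (h : CountableDimensional β) (hf : IsInducing f) :
    CountableDimensional α := by
  obtain ⟨C, hcov, hzd⟩ := h
  refine ⟨fun n => f ⁻¹' C n, ?_, fun n => ?_⟩
  · rw [← preimage_iUnion, hcov, preimage_univ]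
  · refine (hzd n).of_isInducing (f := fun x : (f ⁻¹' C n) => (⟨f x.1, x.2⟩ : C n)) ?_
    refine isInducing_cancel (g := (Subtype.val : C n → β)) IsInducing.subtypeVal ?_
    exact hf.comp IsInducing.subtypeVal

private lemma ZeroDimensional.countableDimensional {α : Type*} [TopologicalSpace α]
    (h : ZeroDimensional α) : CountableDimensional α :=
  ⟨fun _ => univ, by rw [iUnion_const], fun _ => h.of_isInducing IsInducing.subtypeVal⟩

private lemma zeroDimensional_image_val {α : Type*} [TopologicalSpace α] {S : Set α} {C : Set S}
    (h : ZeroDimensional C) : ZeroDimensional (Subtype.val '' C : Set α) := by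
  have hmem : ∀ x : (Subtype.val '' C : Set α), ∃ hx : x.1 ∈ S, (⟨x.1, hx⟩ : S) ∈ C := by
    rintro ⟨x, hx⟩
    obtain ⟨y, hy, rfl⟩ := hx
    exact ⟨y.2, hy⟩
  refine h.of_isInducing (f := fun x => (⟨⟨x.1, (hmem x).choose⟩, (hmem x).choose_spec⟩ : C)) ?_
  refine isInducing_cancel (g := fun y : C => (y.1.1 : α)) ?_ ?_
  · exact IsInducing.subtypeVal.comp IsInducing.subtypeVal
  · exact IsInducing.subtypeVal

private lemma countableDimensional_union {α : Type*} [TopologicalSpace α] {S T : Set α}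
    (hS : CountableDimensional S) (hT : CountableDimensional T) (hST : S ∪ T = univ) :
    CountableDimensional α := by
  obtain ⟨C, hCcov, hCzd⟩ := hS
  obtain ⟨D, hDcov, hDzd⟩ := hT
  refine ⟨fun n => if Even n then Subtype.val '' C (n / 2) else Subtype.val '' D (n / 2),
    ?_, fun n => ?_⟩
  · apply eq_univ_of_forall
    intro x
    have hx : x ∈ S ∪ T := by rw [hST]; exact mem_univ x
    rcases hx with hx | hx
    · have : (⟨x, hx⟩ : S) ∈ ⋃ n, C n := by rw [hCcov]; exact mem_univ _
      obtain ⟨n, hn⟩ := mem_iUnion.1 this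
      refine mem_iUnion.2 ⟨2 * n, ?_⟩
      have h2 : 2 * n / 2 = n := by omega
      rw [if_pos (even_two_mul n), h2]
      exact ⟨⟨x, hx⟩, hn, rfl⟩
    · have : (⟨x, hx⟩ : T) ∈ ⋃ n, D n := by rw [hDcov]; exact mem_univ _
      obtain ⟨n, hn⟩ := mem_iUnion.1 this
      refine mem_iUnion.2 ⟨2 * n + 1, ?_⟩
      have hodd : ¬ Even (2 * n + 1) := by rw [Nat.even_iff]; omega
      have h2 : (2 * n + 1) / 2 = n := by omega
      rw [if_neg hodd, h2]
      exact ⟨⟨x, hx⟩, hn, rfl⟩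
  · dsimp only
    by_cases h : Even n
    · show ZeroDimensional ((if Even n then Subtype.val '' C (n / 2) else Subtype.val '' D (n / 2) : Set α)); rw [if_pos h]; exact zeroDimensional_image_val (hCzd _)
    · show ZeroDimensional ((if Even n then Subtype.val '' C (n / 2) else Subtype.val '' D (n / 2) : Set α)); rw [if_neg h]; exact zeroDimensional_image_val (hDzd _)

private lemma core_iff (E : Set HilbertCube)
    (hcompl : CountableDimensional (Eᶜ : Set HilbertCube))
    (hzero : ∀ A : Set HilbertCube, A ⊆ E → CountableDimensional A → ZeroDimensional A)
    {K : Set HilbertCube} (hK : IsClosed K) :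
    CountableDimensional K ↔ ZeroDimensional (Subtype.val ⁻¹' K : Set E) := by
  constructor
  · intro h
    have h1 : CountableDimensional (E ∩ K : Set HilbertCube) := by
      refine h.of_isInducing (f := fun x : (E ∩ K : Set HilbertCube) => (⟨x.1, x.2.2⟩ : K)) ?_
      exact isInducing_cancel' IsInducing.subtypeVal IsInducing.subtypeVal fun x => rfl
    have h2 := hzero (E ∩ K) inter_subset_left h1
    refine h2.of_isInducing
      (f := fun x : (Subtype.val ⁻¹' K : Set E) =>
        (⟨x.1.1, ⟨x.1.2, x.2⟩⟩ : (E ∩ K : Set HilbertCube))) ?_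
    exact isInducing_cancel' IsInducing.subtypeVal
      (IsInducing.subtypeVal.comp IsInducing.subtypeVal) fun x => rfl
  · intro h
    have hSzd : ZeroDimensional (Subtype.val ⁻¹' E : Set K) := by
      refine h.of_isInducing
        (f := fun x : (Subtype.val ⁻¹' E : Set K) =>
          (⟨⟨x.1.1, x.2⟩, x.1.2⟩ : (Subtype.val ⁻¹' K : Set E))) ?_
      exact isInducing_cancel' (IsInducing.subtypeVal.comp IsInducing.subtypeVal)
        (IsInducing.subtypeVal.comp IsInducing.subtypeVal) fun x => rfl
    have hTcd : CountableDimensional (Subtype.val ⁻¹' Eᶜ : Set K) := by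
      refine hcompl.of_isInducing
        (f := fun x : (Subtype.val ⁻¹' Eᶜ : Set K) =>
          (⟨x.1.1, x.2⟩ : (Eᶜ : Set HilbertCube))) ?_
      exact isInducing_cancel' IsInducing.subtypeVal
        (IsInducing.subtypeVal.comp IsInducing.subtypeVal) fun x => rfl
    refine countableDimensional_union hSzd.countableDimensional hTcd ?_
    rw [← preimage_union, union_compl_self, preimage_univ]

section Hyper

variable {X : Type*} [TopologicalSpace X]

private lemma isOpen_vietoris_sub {U : Set X} (hU : IsOpen U) :
    IsOpen[vietoris X] {A : {A : Set X // IsClosed A} | (A : Set X) ⊆ U} :=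
  isOpen_generateFrom_of_mem (Or.inl ⟨U, hU, rfl⟩)

private lemma isOpen_vietoris_hit {U : Set X} (hU : IsOpen U) :
    IsOpen[vietoris X] {A : {A : Set X // IsClosed A} | ((A : Set X) ∩ U).Nonempty} :=
  isOpen_generateFrom_of_mem (Or.inr ⟨U, hU, rfl⟩)

private lemma le_nhds_generateFrom' {α : Type*} {g : Set (Set α)} {f : Filter α} {a : α}
    (h : ∀ s ∈ g, a ∈ s → s ∈ f) : f ≤ @nhds α (TopologicalSpace.generateFrom g) a := by
  rw [nhds_generateFrom]
  exact le_iInf₂ fun s hs => Filter.le_principal_iff.2 (h s hs.2 hs.1)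

private lemma vietoris_t2 [T1Space X] [NormalSpace X] :
    @T2Space {A : Set X // IsClosed A} (vietoris X) := by
  letI := vietoris X
  have key : ∀ B B' : {A : Set X // IsClosed A}, ∀ x : X, x ∈ (B : Set X) → x ∉ (B' : Set X) →
      ∃ u v : Set {A : Set X // IsClosed A},
        IsOpen u ∧ IsOpen v ∧ B ∈ u ∧ B' ∈ v ∧ Disjoint u v := by
    intro B B' x hx hx'
    obtain ⟨V, W, hV, hW, hxV, hBW, hdisj⟩ :=
      normal_separation isClosed_singleton B'.2 (disjoint_singleton_left.2 hx')
    refine ⟨{A | ((A : Set X) ∩ V).Nonempty}, {A | (A : Set X) ⊆ W},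
      isOpen_vietoris_hit hV, isOpen_vietoris_sub hW,
      ⟨x, hx, hxV (mem_singleton x)⟩, hBW, ?_⟩
    rw [Set.disjoint_left]
    rintro A ⟨y, hyA, hyV⟩ hAW
    exact Set.disjoint_left.1 hdisj hyV (hAW hyA)
  constructor
  intro B B' hne
  have hsets : ¬ ((B : Set X) = (B' : Set X)) := fun h => hne (Subtype.ext h)
  have hx : ∃ x, (x ∈ (B : Set X) ∧ x ∉ (B' : Set X)) ∨
      (x ∈ (B' : Set X) ∧ x ∉ (B : Set X)) := by
    by_contra hcon
    push_neg at hcon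
    exact hsets (Set.ext fun x => ⟨(hcon x).1, (hcon x).2⟩)
  rcases hx with ⟨x, ⟨h1, h2⟩ | ⟨h1, h2⟩⟩
  · obtain ⟨u, v, hu, hv, hBu, hB'v, hd⟩ := key B B' x h1 h2
    exact ⟨u, v, hu, hv, hBu, hB'v, hd⟩
  · obtain ⟨u, v, hu, hv, hB'u, hBv, hd⟩ := key B' B x h1 h2
    exact ⟨v, u, hv, hu, hBv, hB'u, hd.symm⟩

private lemma vietoris_compactSpace [CompactSpace X] :
    @CompactSpace {A : Set X // IsClosed A} (vietoris X) := by
  letI := vietoris X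
  refine ⟨?_⟩
  rw [isCompact_iff_ultrafilter_le_nhds]
  intro 𝒰 _
  set A : Set X := {x | ∀ V : Set X, IsOpen V → x ∈ V →
    {B : {A : Set X // IsClosed A} | ((B : Set X) ∩ V).Nonempty} ∈ 𝒰} with hAdef
  have hAclosed : IsClosed A := by
    rw [← isOpen_compl_iff]
    rw [isOpen_iff_forall_mem_open]
    intro x hx
    simp only [mem_compl_iff, hAdef, mem_setOf_eq] at hx
    push_neg at hx
    obtain ⟨V, hV, hxV, hVnot⟩ := hx
    refine ⟨V, ?_, hV, hxV⟩
    intro y hy hyA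
    exact hVnot (hyA V hV hy)
  refine ⟨⟨A, hAclosed⟩, mem_univ _, ?_⟩
  refine le_nhds_generateFrom' ?_
  rintro s (⟨U, hU, rfl⟩ | ⟨U, hU, rfl⟩) hmem
  · -- A ⊆ U
    have hmem' : A ⊆ U := hmem
    have hVx : ∀ x : X, x ∈ Uᶜ → ∃ V : Set X, IsOpen V ∧ x ∈ V ∧
        {B : {A : Set X // IsClosed A} | ((B : Set X) ∩ V).Nonempty} ∉ 𝒰 := by
      intro x hxU
      by_contra hcon
      push_neg at hcon
      exact hxU (hmem' hcon)
    choose V hVopen hVmem hVnot using hVx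
    have hUc : IsCompact (Uᶜ) := hU.isClosed_compl.isCompact
    obtain ⟨t, ht⟩ := hUc.elim_finite_subcover (fun i : (Uᶜ : Set X) => V i.1 i.2)
      (fun i => hVopen i.1 i.2) (fun x hx => mem_iUnion.2 ⟨⟨x, hx⟩, hVmem x hx⟩)
    have hbig : (⋂ i ∈ t, {B : {A : Set X // IsClosed A} |
        ¬ ((B : Set X) ∩ V i.1 i.2).Nonempty}) ∈ 𝒰 := by
      refine (Filter.biInter_finset_mem t).2 fun i _ => ?_
      exact Ultrafilter.compl_mem_iff_notMem.2 (hVnot i.1 i.2)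
    refine 𝒰.toFilter.mem_of_superset hbig ?_
    intro B hB
    simp only [mem_iInter, mem_setOf_eq] at hB
    intro x hxB
    by_contra hxU
    obtain ⟨i, hit, hxi⟩ := by
      have := ht hxU
      simpa only [mem_iUnion, exists_prop] using this
    exact hB i hit ⟨x, hxB, hxi⟩
  · -- (A ∩ U).Nonempty
    obtain ⟨x, hxA, hxU⟩ := hmem
    exact hxA U hU hxU

end Hyper

private lemma exists_basis_enum (X : Type*) [TopologicalSpace X] [SecondCountableTopology X] :
    ∃ v : ℕ → Set X, (∀ n, IsOpen (v n)) ∧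
      ∀ U : Set X, IsOpen U → ∀ x ∈ U, ∃ n, x ∈ v n ∧ v n ⊆ U := by
  have hc : (insert ∅ (countableBasis X)).Countable :=
    (countable_countableBasis X).insert ∅
  obtain ⟨v, hv⟩ := hc.exists_eq_range (insert_nonempty _ _)
  refine ⟨v, ?_, ?_⟩
  · intro n
    have hn : v n ∈ insert ∅ (countableBasis X) := by rw [hv]; exact mem_range_self n
    rcases mem_insert_iff.1 hn with h | h
    · rw [h]; exact isOpen_empty
    · exact isOpen_of_mem_countableBasis h
  · intro U hU x hx
    obtain ⟨W, hW, hxW, hWU⟩ := (isBasis_countableBasis X).exists_subset_of_mem_open hx hU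
    have : W ∈ range v := by rw [← hv]; exact mem_insert_of_mem _ hW
    obtain ⟨n, rfl⟩ := this
    exact ⟨n, hxW, hWU⟩

section Hyper2

variable {X : Type*} [TopologicalSpace X]

private lemma vietoris_secondCountable [CompactSpace X] [SecondCountableTopology X] :
    @SecondCountableTopology {A : Set X // IsClosed A} (vietoris X) := by
  letI := vietoris X
  obtain ⟨v, hvopen, hvbasis⟩ := exists_basis_enum X
  set 𝒮 : Set (Set {A : Set X // IsClosed A}) :=
    (range fun Fs : Finset ℕ => {A : {A : Set X // IsClosed A} | (A : Set X) ⊆ ⋃ n ∈ Fs, v n}) ∪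
    (range fun n : ℕ => {A : {A : Set X // IsClosed A} | ((A : Set X) ∩ v n).Nonempty}) with h𝒮
  have h𝒮count : 𝒮.Countable := (countable_range _).union (countable_range _)
  have hEq : vietoris X = TopologicalSpace.generateFrom 𝒮 := by
    apply le_antisymm
    · apply le_generateFrom
      rintro s (⟨Fs, rfl⟩ | ⟨n, rfl⟩)
      · exact isOpen_vietoris_sub (isOpen_biUnion fun n _ => hvopen n)
      · exact isOpen_vietoris_hit (hvopen n)
    · apply le_generateFrom
      rintro s (⟨U, hU, rfl⟩ | ⟨U, hU, rfl⟩)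
      · -- sub U
        have : {A : {A : Set X // IsClosed A} | (A : Set X) ⊆ U} =
            ⋃ Fs : {Fs : Finset ℕ // ∀ n ∈ Fs, v n ⊆ U},
              {A : {A : Set X // IsClosed A} | (A : Set X) ⊆ ⋃ n ∈ Fs.1, v n} := by
          ext A
          simp only [mem_setOf_eq, mem_iUnion]
          constructor
          · intro hAU
            have hAcomp : IsCompact (A : Set X) := A.2.isCompact
            obtain ⟨t, ht⟩ := hAcomp.elim_finite_subcover
              (fun i : {n : ℕ // v n ⊆ U} => v i.1) (fun i => hvopen i.1)
              (fun x hx => by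
                obtain ⟨n, hxn, hnU⟩ := hvbasis U hU x (hAU hx)
                exact mem_iUnion.2 ⟨⟨n, hnU⟩, hxn⟩)
            refine ⟨⟨t.image Subtype.val, ?_⟩, ?_⟩
            · intro n hn
              obtain ⟨i, _, rfl⟩ := Finset.mem_image.1 hn
              exact i.2
            · intro x hx
              obtain ⟨i, hit, hxi⟩ := by
                have := ht hx
                simpa only [mem_iUnion, exists_prop] using this
              exact mem_biUnion (Finset.mem_image_of_mem _ hit) hxi
          · rintro ⟨Fs, hA⟩ x hx
            obtain ⟨n, hn, hxn⟩ := by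
              have := hA hx
              simpa only [mem_iUnion, exists_prop] using this
            exact Fs.2 n hn hxn
        rw [this]
        exact @isOpen_iUnion _ _ (TopologicalSpace.generateFrom 𝒮) _ fun Fs =>
          isOpen_generateFrom_of_mem (Or.inl (mem_range_self Fs.1))
      · -- hit U
        have : {A : {A : Set X // IsClosed A} | ((A : Set X) ∩ U).Nonempty} =
            ⋃ i : {n : ℕ // v n ⊆ U},
              {A : {A : Set X // IsClosed A} | ((A : Set X) ∩ v i.1).Nonempty} := by
          ext A
          simp only [mem_setOf_eq, mem_iUnion]
          constructor
          · rintro ⟨x, hxA, hxU⟩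
            obtain ⟨n, hxn, hnU⟩ := hvbasis U hU x hxU
            exact ⟨⟨n, hnU⟩, x, hxA, hxn⟩
          · rintro ⟨i, x, hxA, hxi⟩
            exact ⟨x, hxA, i.2 hxi⟩
        rw [this]
        exact @isOpen_iUnion _ _ (TopologicalSpace.generateFrom 𝒮) _ fun i =>
          isOpen_generateFrom_of_mem (Or.inr (mem_range_self i.1))
  have hbasis := isTopologicalBasis_of_subbasis hEq
  exact hbasis.secondCountableTopology
    ((Set.countable_setOf_finite_subset h𝒮count).image _)

end Hyper2

private lemma vietoris_polish {X : Type*} [TopologicalSpace X] [CompactSpace X] [T1Space X]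
    [NormalSpace X] [T2Space X] [SecondCountableTopology X] :
    @PolishSpace {A : Set X // IsClosed A} (vietoris X) := by
  letI := vietoris X
  haveI : CompactSpace {A : Set X // IsClosed A} := vietoris_compactSpace
  haveI : T2Space {A : Set X // IsClosed A} := vietoris_t2
  haveI : SecondCountableTopology {A : Set X // IsClosed A} := vietoris_secondCountable
  haveI : MetrizableSpace {A : Set X // IsClosed A} :=
    metrizableSpace_of_t3_secondCountable _
  letI := metrizableSpaceMetric {A : Set X // IsClosed A}
  infer_instance

private def tripleEquiv : (ℕ → ℕ) ≃ ((ℕ → ℕ) × (ℕ → ℕ) × (ℕ → ℕ)) where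
  toFun σ := (fun n => σ (3 * n), fun n => σ (3 * n + 1), fun n => σ (3 * n + 2))
  invFun p n :=
    if n % 3 = 0 then p.1 (n / 3) else if n % 3 = 1 then p.2.1 (n / 3) else p.2.2 (n / 3)
  left_inv σ := by
    funext n
    by_cases h0 : n % 3 = 0
    · have h : 3 * (n / 3) = n := by omega
      simp [h0, h]
    · by_cases h1 : n % 3 = 1
      · have h : 3 * (n / 3) + 1 = n := by omega
        simp [h0, h1, h]
      · have h : 3 * (n / 3) + 2 = n := by omega
        simp [h0, h1, h]
  right_inv p := by
    refine Prod.ext ?_ (Prod.ext ?_ ?_) <;> funext n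
    · have hm : (3 * n) % 3 = 0 := by omega
      have hd : (3 * n) / 3 = n := by omega
      simp [hm, hd]
    · have hm : (3 * n + 1) % 3 = 1 := by omega
      have hd : (3 * n + 1) / 3 = n := by omega
      simp [hm, hd]
    · have hm : (3 * n + 2) % 3 = 2 := by omega
      have hd : (3 * n + 2) / 3 = n := by omega
      simp [hm, hd]

private lemma continuous_tripleEquiv : Continuous (tripleEquiv : (ℕ → ℕ) → _) := by
  refine Continuous.prodMk ?_ (Continuous.prodMk ?_ ?_) <;>
    exact continuous_pi fun n => continuous_apply _

private lemma analyticSet_empty_or_range {α : Type*} [TopologicalSpace α] {A : Set α}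
    (hA : MeasureTheory.AnalyticSet A) :
    A = ∅ ∨ ∃ g : (ℕ → ℕ) → α, Continuous g ∧ range g = A := by
  rwa [MeasureTheory.AnalyticSet] at hA

private lemma analyticSet_mid {α β γ : Type*} [TopologicalSpace α] [TopologicalSpace β]
    [TopologicalSpace γ] {A : Set β}
    (hu : ∃ u : (ℕ → ℕ) → α, Continuous u ∧ Function.Surjective u)
    (hw : ∃ w : (ℕ → ℕ) → γ, Continuous w ∧ Function.Surjective w)
    (hA : MeasureTheory.AnalyticSet A) :
    MeasureTheory.AnalyticSet {p : α × β × γ | p.2.1 ∈ A} := by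
  obtain ⟨u, hu_cont, hu_surj⟩ := hu
  obtain ⟨w, hw_cont, hw_surj⟩ := hw
  rcases analyticSet_empty_or_range hA with rfl | ⟨g, hg_cont, rfl⟩
  · have : {p : α × β × γ | p.2.1 ∈ (∅ : Set β)} = ∅ := by ext p; simp
    rw [this]; exact MeasureTheory.analyticSet_empty
  · rw [MeasureTheory.AnalyticSet]
    refine Or.inr ⟨fun σ =>
      (u (tripleEquiv σ).1, g (tripleEquiv σ).2.1, w (tripleEquiv σ).2.2), ?_, ?_⟩
    · exact (hu_cont.comp (continuous_fst.comp continuous_tripleEquiv)).prodMk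
        ((hg_cont.comp ((continuous_fst.comp continuous_snd).comp
          continuous_tripleEquiv)).prodMk
          (hw_cont.comp ((continuous_snd.comp continuous_snd).comp continuous_tripleEquiv)))
    · ext p
      simp only [mem_range, mem_setOf_eq]
      constructor
      · rintro ⟨σ, rfl⟩
        exact ⟨_, rfl⟩
      · rintro ⟨y, hy⟩
        obtain ⟨a, ha⟩ := hu_surj p.1
        obtain ⟨c, hc⟩ := hw_surj p.2.2
        refine ⟨tripleEquiv.symm (a, y, c), ?_⟩
        rw [Equiv.apply_symm_apply]
        show (u a, g y, w c) = p
        rw [ha, hy, hc]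

private lemma analyticSet_inter' {α : Type*} [TopologicalSpace α] [T2Space α] {s t : Set α}
    (hs : MeasureTheory.AnalyticSet s) (ht : MeasureTheory.AnalyticSet t) :
    MeasureTheory.AnalyticSet (s ∩ t) := by
  have h : s ∩ t = ⋂ b : Bool, (if b then s else t) := by
    ext x
    simp only [mem_inter_iff, mem_iInter, Bool.forall_bool, if_true, if_false]
    tauto
  rw [h]
  exact MeasureTheory.AnalyticSet.iInter fun b => by cases b <;> simpa

private lemma analyticSet_union' {α : Type*} [TopologicalSpace α] {s t : Set α}
    (hs : MeasureTheory.AnalyticSet s) (ht : MeasureTheory.AnalyticSet t) :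
    MeasureTheory.AnalyticSet (s ∪ t) := by
  have h : s ∪ t = ⋃ b : Bool, (if b then s else t) := by
    ext x
    simp only [mem_union, mem_iUnion, Bool.exists_bool, if_true, if_false]
    tauto
  rw [h]
  exact MeasureTheory.AnalyticSet.iUnion fun b => by cases b <;> simpa

theorem countable_dimensional_compacta_coanalytic_of_complement_souslin
    (E : Set HilbertCube)
    (hBorel : MeasurableSet[borel HilbertCube] E)
    (hcompl : CountableDimensional (Eᶜ : Set HilbertCube))
    (hzero : ∀ A : Set HilbertCube, A ⊆ E → CountableDimensional A → ZeroDimensional A)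
    (hsouslin : IsSouslinIn (effrosSigma E)
      ({A : {A : Set E // IsClosed A} | ZeroDimensional (A : Set E)}ᶜ)) :
    @MeasureTheory.AnalyticSet _ (vietoris HilbertCube)
      ({K : {A : Set HilbertCube // IsClosed A} |
          IsCompact (K : Set HilbertCube) ∧
          CountableDimensional (K : Set HilbertCube)}ᶜ) := by
  classical
  obtain ⟨f, hfmeas, hf𝓐⟩ := hsouslin
  letI tF : TopologicalSpace {A : Set HilbertCube // IsClosed A} := vietoris HilbertCube
  haveI hcs : CompactSpace {A : Set HilbertCube // IsClosed A} := vietoris_compactSpace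
  haveI ht2 : T2Space {A : Set HilbertCube // IsClosed A} := vietoris_t2
  haveI hsc : SecondCountableTopology {A : Set HilbertCube // IsClosed A} :=
    vietoris_secondCountable
  haveI hpol : PolishSpace {A : Set HilbertCube // IsClosed A} := vietoris_polish
  letI mF : MeasurableSpace {A : Set HilbertCube // IsClosed A} := borel _
  haveI hbF : BorelSpace {A : Set HilbertCube // IsClosed A} := ⟨rfl⟩
  have hEmeas : MeasurableSet E := by
    have h := BorelSpace.measurable_eq (α := HilbertCube)
    rw [h]; exact hBorel
  obtain ⟨v, hvopen, hvbasis⟩ := exists_basis_enum HilbertCube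
  -- the closure embedding of F(E) into F(HilbertCube)
  set ψ : {A : Set E // IsClosed A} → {A : Set HilbertCube // IsClosed A} :=
    fun A => ⟨closure (Subtype.val '' (A : Set E)), isClosed_closure⟩ with hψdef
  have hcomap : effrosSigma E ≤ MeasurableSpace.comap ψ mF := by
    apply MeasurableSpace.generateFrom_le
    rintro _ ⟨U, hU, rfl⟩
    obtain ⟨V, hV, rfl⟩ := isOpen_induced_iff.1 hU
    refine ⟨{B : {A : Set HilbertCube // IsClosed A} | ((B : Set HilbertCube) ∩ V).Nonempty},
      (isOpen_vietoris_hit hV).measurableSet, ?_⟩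
    ext A
    simp only [mem_preimage, mem_setOf_eq, hψdef]
    constructor
    · rintro ⟨x, hx1, hx2⟩
      have h1 : x ∈ closure (V ∩ (Subtype.val '' (A : Set E))) := hV.inter_closure ⟨hx2, hx1⟩
      have h2 : (V ∩ (Subtype.val '' (A : Set E))).Nonempty := closure_nonempty_iff.1 ⟨x, h1⟩
      obtain ⟨y, hyV, a, haA, rfl⟩ := h2
      exact ⟨a, haA, hyV⟩
    · rintro ⟨a, haA, haV⟩
      exact ⟨a.1, subset_closure ⟨a, haA, rfl⟩, haV⟩
  have hchoose : ∀ s : List ℕ, ∃ B, MeasurableSet[mF] B ∧ ψ ⁻¹' B = f s :=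
    fun s => hcomap _ (hfmeas s)
  choose Bset hBmeas hBpre using hchoose
  have hmem𝓐 : ∀ A : {A : Set E // IsClosed A},
      (¬ ZeroDimensional (A : Set E)) ↔
        ∃ σ : ℕ → ℕ, ∀ n : ℕ, ψ A ∈ Bset (List.ofFn fun i : Fin n => σ i) := by
    intro A
    have h1 : A ∈ ({A : {A : Set E // IsClosed A} | ZeroDimensional (A : Set E)}ᶜ) ↔
        ∃ σ : ℕ → ℕ, ∀ n : ℕ, A ∈ f (List.ofFn fun i : Fin n => σ i) := by
      rw [hf𝓐]
      simp only [mem_iUnion, mem_iInter]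
    have h2 : ∀ s, (A ∈ f s ↔ ψ A ∈ Bset s) := fun s => by
      rw [← hBpre s]; exact Iff.rfl
    constructor
    · intro h
      obtain ⟨σ, hσ⟩ := h1.1 h
      exact ⟨σ, fun n => (h2 _).1 (hσ n)⟩
    · rintro ⟨σ, hσ⟩
      exact h1.2 ⟨σ, fun n => (h2 _).2 (hσ n)⟩
  -- the membership relation is closed
  have hmemcl : IsClosed {p : {A : Set HilbertCube // IsClosed A} × HilbertCube |
      p.2 ∈ (p.1 : Set HilbertCube)} := by
    rw [← isOpen_compl_iff, isOpen_iff_forall_mem_open]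
    rintro ⟨B, x⟩ hBx
    simp only [mem_compl_iff, mem_setOf_eq] at hBx
    obtain ⟨V, W, hV, hW, hxV, hBW, hdisj⟩ :=
      normal_separation isClosed_singleton B.2 (disjoint_singleton_left.2 hBx)
    refine ⟨{A : {A : Set HilbertCube // IsClosed A} | (A : Set HilbertCube) ⊆ W} ×ˢ V, ?_,
      (isOpen_vietoris_sub hW).prod hV, ⟨hBW, hxV (mem_singleton x)⟩⟩
    rintro ⟨A, y⟩ ⟨hAW, hyV⟩
    simp only [mem_compl_iff, mem_setOf_eq]
    intro hyA
    exact Set.disjoint_left.1 hdisj hyV (hAW hyA)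
  -- hitting a Borel set is analytic
  have h_inter : ∀ M : Set HilbertCube, MeasurableSet M →
      AnalyticSet {B : {A : Set HilbertCube // IsClosed A} |
        ((B : Set HilbertCube) ∩ M).Nonempty} := by
    intro M hM
    have heq : {B : {A : Set HilbertCube // IsClosed A} | ((B : Set HilbertCube) ∩ M).Nonempty}
        = Prod.fst '' ({p : {A : Set HilbertCube // IsClosed A} × HilbertCube |
            p.2 ∈ (p.1 : Set HilbertCube)} ∩ {p | p.2 ∈ M}) := by
      ext B
      simp only [mem_setOf_eq, mem_image, mem_inter_iff]
      constructor
      · rintro ⟨x, hxB, hxM⟩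
        exact ⟨(B, x), ⟨hxB, hxM⟩, rfl⟩
      · rintro ⟨⟨B', x⟩, ⟨hxB, hxM⟩, rfl⟩
        exact ⟨x, hxB, hxM⟩
    rw [heq]
    exact (MeasurableSet.analyticSet (hmemcl.measurableSet.inter
      (measurable_snd hM))).image_of_continuous continuous_fst
  -- the three pieces
  set W1 : Set ({A : Set HilbertCube // IsClosed A} × {A : Set HilbertCube // IsClosed A} ×
      (ℕ → ℕ)) := {p | (p.2.1 : Set HilbertCube) ⊆ (p.1 : Set HilbertCube)} with hW1def
  set W2 : Set ({A : Set HilbertCube // IsClosed A} × {A : Set HilbertCube // IsClosed A} ×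
      (ℕ → ℕ)) := ⋂ n : ℕ, {p | p.2.1 ∈ Bset (List.ofFn fun i : Fin n => p.2.2 i)} with hW2def
  set W3 : Set ({A : Set HilbertCube // IsClosed A} × {A : Set HilbertCube // IsClosed A} ×
      (ℕ → ℕ)) := ⋂ n : ℕ, ({p | ¬ ((p.2.1 : Set HilbertCube) ∩ v n).Nonempty} ∪
      {p | ((p.2.1 : Set HilbertCube) ∩ (v n ∩ E)).Nonempty}) with hW3def
  have hW1meas : MeasurableSet W1 := by
    have heq : W1 = ⋂ n : ℕ, ({p : {A : Set HilbertCube // IsClosed A} ×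
        {A : Set HilbertCube // IsClosed A} × (ℕ → ℕ) |
          ((p.1 : Set HilbertCube) ∩ v n).Nonempty} ∪
        {p | ¬ ((p.2.1 : Set HilbertCube) ∩ v n).Nonempty}) := by
      rw [hW1def]
      ext p
      simp only [mem_setOf_eq, mem_iInter, mem_union]
      constructor
      · intro hsub n
        by_cases h : ((p.2.1 : Set HilbertCube) ∩ v n).Nonempty
        · obtain ⟨x, hx1, hx2⟩ := h
          exact Or.inl ⟨x, hsub hx1, hx2⟩
        · exact Or.inr h
      · intro h x hx
        by_contra hxK
        obtain ⟨n, hxn, hnsub⟩ := hvbasis _ p.1.2.isOpen_compl x hxK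
        rcases h n with h1 | h1
        · obtain ⟨y, hy1, hy2⟩ := h1
          exact hnsub hy2 hy1
        · exact h1 ⟨x, hx, hxn⟩
    rw [heq]
    refine MeasurableSet.iInter fun n => MeasurableSet.union ?_ ?_
    · exact continuous_fst.measurable (isOpen_vietoris_hit (hvopen n)).measurableSet
    · exact ((continuous_fst.comp continuous_snd).measurable
        (isOpen_vietoris_hit (hvopen n)).measurableSet).compl
  have hW2meas : MeasurableSet W2 := by
    rw [hW2def]
    refine MeasurableSet.iInter fun n => ?_
    have heq : {p : {A : Set HilbertCube // IsClosed A} ×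
        {A : Set HilbertCube // IsClosed A} × (ℕ → ℕ) |
          p.2.1 ∈ Bset (List.ofFn fun i : Fin n => p.2.2 i)} =
        ⋃ s : Fin n → ℕ, ({p | ∀ i : Fin n, p.2.2 i = s i} ∩
          {p | p.2.1 ∈ Bset (List.ofFn s)}) := by
      ext p
      simp only [mem_iUnion, mem_inter_iff, mem_setOf_eq]
      constructor
      · intro h
        exact ⟨fun i => p.2.2 i, fun i => rfl, h⟩
      · rintro ⟨s, hs, h⟩
        have hl : (List.ofFn fun i : Fin n => p.2.2 i) = List.ofFn s := by
          congr 1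
          funext i
          exact hs i
        rwa [hl]
    rw [heq]
    refine MeasurableSet.iUnion fun s => MeasurableSet.inter ?_ ?_
    · have heq2 : {p : {A : Set HilbertCube // IsClosed A} ×
          {A : Set HilbertCube // IsClosed A} × (ℕ → ℕ) | ∀ i : Fin n, p.2.2 i = s i} =
          ⋂ i : Fin n, (fun p : {A : Set HilbertCube // IsClosed A} ×
            {A : Set HilbertCube // IsClosed A} × (ℕ → ℕ) => p.2.2 i) ⁻¹' {s i} := by
        ext p
        simp [mem_iInter]
      rw [heq2]
      rcases Nat.eq_zero_or_pos n with rfl | hn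
      · simp
      · haveI : Nonempty (Fin n) := ⟨⟨0, hn⟩⟩
        refine MeasurableSet.iInter fun i => ?_
        have hc : Continuous (fun p : {A : Set HilbertCube // IsClosed A} ×
            {A : Set HilbertCube // IsClosed A} × (ℕ → ℕ) => p.2.2 i) :=
          by fun_prop
        exact hc.measurable (measurableSet_singleton _)
    · exact (continuous_fst.comp continuous_snd).measurable (hBmeas _)
  have hsurj𝓕 : ∃ u : (ℕ → ℕ) → {A : Set HilbertCube // IsClosed A},
      Continuous u ∧ Function.Surjective u := by
    haveI : Nonempty {A : Set HilbertCube // IsClosed A} := ⟨⟨∅, isClosed_empty⟩⟩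
    exact PolishSpace.exists_nat_nat_continuous_surjective _
  have hsurjN : ∃ w : (ℕ → ℕ) → (ℕ → ℕ), Continuous w ∧ Function.Surjective w :=
    ⟨id, continuous_id, Function.surjective_id⟩
  have hW3an : AnalyticSet W3 := by
    rw [hW3def]
    refine AnalyticSet.iInter fun n => analyticSet_union' ?_ ?_
    · exact (((continuous_fst.comp continuous_snd).measurable
        (isOpen_vietoris_hit (hvopen n)).measurableSet).compl).analyticSet
    · exact analyticSet_mid hsurj𝓕 hsurjN (h_inter _ ((hvopen n).measurableSet.inter hEmeas))
  -- identification of the target set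
  have hKcompact : ∀ K : {A : Set HilbertCube // IsClosed A},
      IsCompact (K : Set HilbertCube) := fun K => K.2.isCompact
  have hcore : ∀ K : {A : Set HilbertCube // IsClosed A},
      CountableDimensional (K : Set HilbertCube) ↔
        ZeroDimensional (Subtype.val ⁻¹' (K : Set HilbertCube) : Set E) :=
    fun K => core_iff E hcompl hzero K.2
  have hset : ({K : {A : Set HilbertCube // IsClosed A} |
      IsCompact (K : Set HilbertCube) ∧ CountableDimensional (K : Set HilbertCube)}ᶜ)
      = Prod.fst '' ((W1 ∩ W2) ∩ W3) := by
    ext K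
    simp only [mem_compl_iff, mem_setOf_eq, mem_image, mem_inter_iff]
    constructor
    · intro hK
      have hncd : ¬ CountableDimensional (K : Set HilbertCube) := fun h => hK ⟨hKcompact K, h⟩
      have hnzd : ¬ ZeroDimensional (Subtype.val ⁻¹' (K : Set HilbertCube) : Set E) :=
        fun h => hncd ((hcore K).2 h)
      have hKA : IsClosed (Subtype.val ⁻¹' (K : Set HilbertCube) : Set E) :=
        K.2.preimage continuous_subtype_val
      obtain ⟨σ, hσ⟩ := (hmem𝓐 ⟨Subtype.val ⁻¹' (K : Set HilbertCube), hKA⟩).1 hnzd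
      refine ⟨(K, ψ ⟨Subtype.val ⁻¹' (K : Set HilbertCube), hKA⟩, σ), ⟨⟨?_, ?_⟩, ?_⟩, rfl⟩
      · -- W1
        rw [hW1def]
        show (closure (Subtype.val '' (Subtype.val ⁻¹' (K : Set HilbertCube) : Set E))
          : Set HilbertCube) ⊆ (K : Set HilbertCube)
        rw [Subtype.image_preimage_coe]
        exact closure_minimal inter_subset_right K.2
      · -- W2
        rw [hW2def]
        exact mem_iInter.2 fun n => hσ n
      · -- W3
        rw [hW3def]
        refine mem_iInter.2 fun n => ?_
        by_cases h : ((closure (Subtype.val '' (Subtype.val ⁻¹' (K : Set HilbertCube) : Set E)))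
            ∩ v n).Nonempty
        · right
          obtain ⟨x, hx1, hx2⟩ := h
          rw [Subtype.image_preimage_coe] at hx1
          have h1 : x ∈ closure (v n ∩ (E ∩ (K : Set HilbertCube))) :=
            (hvopen n).inter_closure ⟨hx2, hx1⟩
          obtain ⟨y, hyn, hyE, hyK⟩ := closure_nonempty_iff.1 ⟨x, h1⟩
          refine ⟨y, ?_, hyn, hyE⟩
          show y ∈ closure (Subtype.val '' (Subtype.val ⁻¹' (K : Set HilbertCube) : Set E))
          rw [Subtype.image_preimage_coe]
          exact subset_closure ⟨hyE, hyK⟩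
        · left
          exact h
    · rintro ⟨⟨K₀, B, σ⟩, ⟨⟨hw1, hw2⟩, hw3⟩, rfl⟩
      rintro ⟨_, hcd⟩
      rw [hW1def] at hw1
      rw [hW2def] at hw2
      rw [hW3def] at hw3
      have hw1' : (B : Set HilbertCube) ⊆ (K₀ : Set HilbertCube) := hw1
      have hBsub : (B : Set HilbertCube) ⊆ closure ((B : Set HilbertCube) ∩ E) := by
        intro x hx
        rw [mem_closure_iff]
        intro o ho hxo
        obtain ⟨n, hxn, hno⟩ := hvbasis o ho x hxo
        rcases mem_iInter.1 hw3 n with hempty | hne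
        · exact absurd ⟨x, hx, hxn⟩ hempty
        · obtain ⟨y, hyB, hyn, hyE⟩ := hne
          exact ⟨y, hno hyn, hyB, hyE⟩
      have hA : IsClosed (Subtype.val ⁻¹' (B : Set HilbertCube) : Set E) :=
        B.2.preimage continuous_subtype_val
      have hψB : ψ ⟨Subtype.val ⁻¹' (B : Set HilbertCube), hA⟩ = B := by
        apply Subtype.ext
        show closure (Subtype.val '' (Subtype.val ⁻¹' (B : Set HilbertCube) : Set E))
          = (B : Set HilbertCube)
        rw [Subtype.image_preimage_coe]
        apply Subset.antisymm
        · exact closure_minimal inter_subset_right B.2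
        · intro x hx
          refine closure_mono ?_ (hBsub hx)
          rintro y ⟨hy1, hy2⟩
          exact ⟨hy2, hy1⟩
      have hnzdB : ¬ ZeroDimensional (Subtype.val ⁻¹' (B : Set HilbertCube) : Set E) :=
        (hmem𝓐 _).2 ⟨σ, fun n => by rw [hψB]; exact mem_iInter.1 hw2 n⟩
      apply hnzdB
      have hzdK := (hcore K₀).1 hcd
      refine hzdK.of_isInducing (f := fun x : (Subtype.val ⁻¹' (B : Set HilbertCube) : Set E) =>
        (⟨x.1, hw1' x.2⟩ : (Subtype.val ⁻¹' (K₀ : Set HilbertCube) : Set E))) ?_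
      exact isInducing_cancel' IsInducing.subtypeVal IsInducing.subtypeVal fun x => rfl
  show AnalyticSet _
  rw [hset]
  exact (analyticSet_inter' ((hW1meas.inter hW2meas).analyticSet) hW3an).image_of_continuous
    continuous_fst
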